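/- Let S be a countable set, p₁ a probability mass function on S, and γ₁ : S → (0,∞). Fix σ > 0 and r > 0, and define for t > 0, F(t) = Σ_{z₁∈S} p₁(z₁) · Φ((r²/2 + σ²(log t − log γ₁(z₁)))/(σr)), where Φ is the standard normal cumulative distribution function. Then F is continuous and strictly increasing on (0,∞), F(t) → 0 as t → 0⁺ and F(t) → 1 as t → ∞; consequently, for every p_A ∈ (0,1) there exists a unique t* > 0 with F(t*) = p_A. -/

import Mathlib

open MeasureTheory ProbabilityTheory

/-- The standard normal cumulative distribution function `Φ`. -/
noncomputable def stdNormalCDF (t : ℝ) : ℝ :=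
  ((gaussianReal 0 1) (Set.Iic t)).toReal

open Filter Set
lemma stdNormalCDF_eq_integral (t : ℝ) :
    stdNormalCDF t = ∫ x in Set.Iic t, gaussianPDFReal 0 1 x := by
  rw [stdNormalCDF, gaussianReal_apply_eq_integral 0 one_ne_zero,
    ENNReal.toReal_ofReal (setIntegral_nonneg measurableSet_Iic
      fun x _ => gaussianPDFReal_nonneg 0 1 x)]

lemma stdNormalCDF_sub (s t : ℝ) :
    stdNormalCDF t - stdNormalCDF s = ∫ x in s..t, gaussianPDFReal 0 1 x := by
  rw [stdNormalCDF_eq_integral, stdNormalCDF_eq_integral,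
    intervalIntegral.integral_Iic_sub_Iic ((integrable_gaussianPDFReal 0 1).integrableOn)
      ((integrable_gaussianPDFReal 0 1).integrableOn)]

lemma stdNormalCDF_strictMono : StrictMono stdNormalCDF := by
  intro s t hst
  have h := intervalIntegral.intervalIntegral_pos_of_pos_on
    ((integrable_gaussianPDFReal 0 1).intervalIntegrable)
    (fun x _ => gaussianPDFReal_pos 0 1 x one_ne_zero) hst
  rw [← stdNormalCDF_sub] at h
  linarith

lemma stdNormalCDF_continuous : Continuous stdNormalCDF := by
  have h := (integrable_gaussianPDFReal 0 1).continuous_primitive 0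
  have : stdNormalCDF = fun t => (∫ x in (0:ℝ)..t, gaussianPDFReal 0 1 x) + stdNormalCDF 0 := by
    funext t
    have := stdNormalCDF_sub 0 t
    linarith
  rw [this]
  exact h.add continuous_const

lemma stdNormalCDF_eq_cdf (t : ℝ) : stdNormalCDF t = cdf (gaussianReal 0 1) t :=
  (cdf_eq_real _ t).symm

lemma stdNormalCDF_tendsto_atBot : Tendsto stdNormalCDF atBot (nhds 0) := by
  simp only [funext stdNormalCDF_eq_cdf]
  exact tendsto_cdf_atBot _

lemma stdNormalCDF_tendsto_atTop : Tendsto stdNormalCDF atTop (nhds 1) := by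
  simp only [funext stdNormalCDF_eq_cdf]
  exact tendsto_cdf_atTop _

lemma stdNormalCDF_nonneg (t : ℝ) : 0 ≤ stdNormalCDF t := ENNReal.toReal_nonneg

lemma stdNormalCDF_le_one (t : ℝ) : stdNormalCDF t ≤ 1 := by
  rw [stdNormalCDF]
  exact ENNReal.toReal_le_of_le_ofReal one_pos.le (by simpa using prob_le_one)

/-- **Existence and uniqueness of the hybrid Neyman–Pearson threshold.**
The hybrid likelihood-ratio CDF
`F(t) = Σ_{z₁} p₁(z₁)·Φ((r²/2 + σ²(log t − log γ₁(z₁)))/(σr))`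
is continuous and strictly increasing on `(0,∞)`, tends to `0` at `0⁺` and to `1` at `∞`;
hence for every `p_A ∈ (0,1)` there is a unique `t* > 0` with `F(t*) = p_A`. -/
theorem hybrid_capacity_cdf_properties
    {S : Type*} [Countable S]
    (p₁ : S → ℝ) (hp₁nn : ∀ z, 0 ≤ p₁ z) (hp₁sum : ∑' z, p₁ z = 1)
    (γ₁ : S → ℝ) (hγ₁ : ∀ z, 0 < γ₁ z)
    (σ r : ℝ) (hσ : 0 < σ) (hr : 0 < r)
    (F : ℝ → ℝ)
    (hF : F = fun t => ∑' z₁, p₁ z₁ *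
      stdNormalCDF ((r ^ 2 / 2 + σ ^ 2 * (Real.log t - Real.log (γ₁ z₁))) / (σ * r))) :
    ContinuousOn F (Set.Ioi 0) ∧
      StrictMonoOn F (Set.Ioi 0) ∧
      Filter.Tendsto F (nhdsWithin 0 (Set.Ioi 0)) (nhds 0) ∧
      Filter.Tendsto F Filter.atTop (nhds 1) ∧
      ∀ pA ∈ Set.Ioo (0 : ℝ) 1, ∃! t : ℝ, 0 < t ∧ F t = pA := by
  have hσr : 0 < σ * r := mul_pos hσ hr
  have hσ2 : (0:ℝ) < σ ^ 2 := by positivity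
  set a : S → ℝ → ℝ := fun z t =>
    (r ^ 2 / 2 + σ ^ 2 * (Real.log t - Real.log (γ₁ z))) / (σ * r) with ha
  set f : S → ℝ → ℝ := fun z t => p₁ z * stdNormalCDF (a z t) with hfdef
  have hFf : ∀ t, F t = ∑' z, f z t := fun t => by rw [hF]
  -- summability of the bound
  have hsum : Summable p₁ := by
    by_contra h
    rw [tsum_eq_zero_of_not_summable h] at hp₁sum
    norm_num at hp₁sum
  -- bounds
  have hf_nonneg : ∀ z t, 0 ≤ f z t := fun z t =>
    mul_nonneg (hp₁nn z) (stdNormalCDF_nonneg _)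
  have hf_le : ∀ z t, f z t ≤ p₁ z := fun z t => by
    simpa using mul_le_mul_of_nonneg_left (stdNormalCDF_le_one (a z t)) (hp₁nn z)
  have hf_norm : ∀ z t, ‖f z t‖ ≤ p₁ z := fun z t => by
    rw [Real.norm_of_nonneg (hf_nonneg z t)]; exact hf_le z t
  have hf_summable : ∀ t, Summable fun z => f z t := fun t =>
    hsum.of_nonneg_of_le (fun z => hf_nonneg z t) (fun z => hf_le z t)
  -- strict monotonicity of the inner argument
  have ha_strict : ∀ z, ∀ s t : ℝ, 0 < s → s < t → a z s < a z t := by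
    intro z s t hs hst
    have hlog := Real.log_lt_log hs hst
    have : r ^ 2 / 2 + σ ^ 2 * (Real.log s - Real.log (γ₁ z))
        < r ^ 2 / 2 + σ ^ 2 * (Real.log t - Real.log (γ₁ z)) := by nlinarith
    exact div_lt_div_of_pos_right this hσr
  have ha_mono : ∀ z, ∀ s t : ℝ, 0 < s → s ≤ t → a z s ≤ a z t := by
    intro z s t hs hst
    rcases eq_or_lt_of_le hst with rfl | h
    · exact le_rfl
    · exact (ha_strict z s t hs h).le
  -- continuity of each term on Ioi 0
  have ha_cont : ∀ z, ContinuousOn (a z) (Set.Ioi 0) := by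
    intro z
    apply ContinuousOn.div_const
    apply continuousOn_const.add
    apply continuousOn_const.mul
    exact (Real.continuousOn_log.mono fun x hx => ne_of_gt hx).sub continuousOn_const
  have hf_cont : ∀ z, ContinuousOn (f z) (Set.Ioi 0) := fun z =>
    continuousOn_const.mul (stdNormalCDF_continuous.comp_continuousOn (ha_cont z))
  -- 1. continuity
  have hcont : ContinuousOn F (Set.Ioi 0) := by
    rw [hF]
    exact continuousOn_tsum hf_cont hsum fun z t _ => hf_norm z t
  -- 2. strict monotonicity
  have hmono : StrictMonoOn F (Set.Ioi 0) := by
    intro s hs t ht hst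
    rw [hFf s, hFf t]
    obtain ⟨z₀, hz₀⟩ : ∃ z, 0 < p₁ z := by
      by_contra h
      push_neg at h
      have : ∀ z, p₁ z = 0 := fun z => le_antisymm (h z) (hp₁nn z)
      rw [tsum_congr this, tsum_zero] at hp₁sum
      norm_num at hp₁sum
    refine Summable.tsum_lt_tsum (i := z₀) (fun z => ?_) ?_ (hf_summable s) (hf_summable t)
    · exact mul_le_mul_of_nonneg_left
        ((stdNormalCDF_strictMono.monotone (ha_mono z s t hs hst.le))) (hp₁nn z)
    · exact mul_lt_mul_of_pos_left
        (stdNormalCDF_strictMono (ha_strict z₀ s t hs hst)) hz₀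
  -- limits of the inner argument
  have ha_tendsto_bot : ∀ z, Filter.Tendsto (a z) (nhdsWithin 0 (Set.Ioi 0)) Filter.atBot := by
    intro z
    have h1 : Filter.Tendsto Real.log (nhdsWithin 0 (Set.Ioi 0)) Filter.atBot :=
      Real.tendsto_log_nhdsGT_zero
    have h2 : Filter.Tendsto (fun t => r ^ 2 / 2 + σ ^ 2 * (Real.log t - Real.log (γ₁ z)))
        (nhdsWithin 0 (Set.Ioi 0)) Filter.atBot := by
      apply Filter.tendsto_atBot_add_const_left
      exact Filter.Tendsto.const_mul_atBot hσ2
        (Filter.tendsto_atBot_add_const_right _ _ h1)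
    exact Filter.Tendsto.atBot_div_const hσr h2
  have ha_tendsto_top : ∀ z, Filter.Tendsto (a z) Filter.atTop Filter.atTop := by
    intro z
    have h1 : Filter.Tendsto Real.log Filter.atTop Filter.atTop := Real.tendsto_log_atTop
    have h2 : Filter.Tendsto (fun t => r ^ 2 / 2 + σ ^ 2 * (Real.log t - Real.log (γ₁ z)))
        Filter.atTop Filter.atTop := by
      apply Filter.tendsto_atTop_add_const_left
      exact Filter.Tendsto.const_mul_atTop hσ2
        (Filter.tendsto_atTop_add_const_right _ _ h1)
    exact Filter.Tendsto.atTop_div_const hσr h2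
  -- 3. limit at 0⁺
  have hlim0 : Filter.Tendsto F (nhdsWithin 0 (Set.Ioi 0)) (nhds 0) := by
    have : Filter.Tendsto (fun t => ∑' z, f z t) (nhdsWithin 0 (Set.Ioi 0))
        (nhds (∑' z : S, (0:ℝ))) := by
      apply tendsto_tsum_of_dominated_convergence hsum
      · intro z
        simpa using (stdNormalCDF_tendsto_atBot.comp (ha_tendsto_bot z)).const_mul (p₁ z)
      · exact Filter.Eventually.of_forall fun t z => hf_norm z t
    rw [tsum_zero] at this
    exact this.congr fun t => (hFf t).symm
  -- 4. limit at ∞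
  have hlim1 : Filter.Tendsto F Filter.atTop (nhds 1) := by
    have : Filter.Tendsto (fun t => ∑' z, f z t) Filter.atTop (nhds (∑' z, p₁ z)) := by
      apply tendsto_tsum_of_dominated_convergence hsum
      · intro z
        simpa using (stdNormalCDF_tendsto_atTop.comp (ha_tendsto_top z)).const_mul (p₁ z)
      · exact Filter.Eventually.of_forall fun t z => hf_norm z t
    rw [hp₁sum] at this
    exact this.congr fun t => (hFf t).symm
  refine ⟨hcont, hmono, hlim0, hlim1, ?_⟩
  -- 5. existence and uniqueness
  intro pA hpA
  obtain ⟨hpA0, hpA1⟩ := hpA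
  obtain ⟨u, hu, hFu⟩ : ∃ u, 0 < u ∧ F u < pA := by
    have := (hlim0.eventually (eventually_lt_nhds hpA0)).and self_mem_nhdsWithin
    obtain ⟨u, h1, h2⟩ := this.exists
    exact ⟨u, h2, h1⟩
  obtain ⟨v, hv, hFv⟩ : ∃ v, u < v ∧ pA < F v := by
    have := (hlim1.eventually (eventually_gt_nhds hpA1)).and (Filter.eventually_gt_atTop u)
    obtain ⟨v, h1, h2⟩ := this.exists
    exact ⟨v, h2, h1⟩
  have hIcc : Set.Icc u v ⊆ Set.Ioi 0 := fun x hx => lt_of_lt_of_le hu hx.1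
  have := intermediate_value_Icc hv.le (hcont.mono hIcc)
  obtain ⟨t, htm, htF⟩ := this ⟨hFu.le, hFv.le⟩
  have ht0 : 0 < t := hIcc htm
  refine ⟨t, ⟨ht0, htF⟩, ?_⟩
  rintro y ⟨hy0, hyF⟩
  exact hmono.injOn hy0 ht0 (by rw [hyF, htF])
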